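/- Assume μ has finite moments of all orders. For every real polynomial P of degree ≥ 1, the sequence E[|X_{P,L}|²] = (1/|Λ_L|) Var(Tr P(H^ω_L)) converges as L → ∞ (so the limiting variance σ_P² is attained as a genuine limit, not merely a limsup). -/

import Mathlib

set_option maxHeartbeats 1000000


open MeasureTheory ProbabilityTheory Filter Topology

noncomputable section

/-- Configuration space `Ω = ℝ^{ℤ^d}`. -/
abbrev Cfg (d : ℕ) : Type := (Fin d → ℤ) → ℝ

/-- The discrete cube `Λ_L = {n ∈ ℤ^d : |n_i| ≤ L}`. -/
def cube (d L : ℕ) : Finset (Fin d → ℤ) :=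
  Fintype.piFinset fun _ => Finset.Icc (-(L : ℤ)) (L : ℤ)

/-- The finite-volume Anderson Hamiltonian `H^ω_L` as a `Λ_L × Λ_L` real matrix. -/
def ham (d L : ℕ) (ω : Cfg d) : Matrix (cube d L) (cube d L) ℝ :=
  Matrix.of fun n m =>
    if (∑ i, |(n : Fin d → ℤ) i - (m : Fin d → ℤ) i|) = 1 then 1
    else if n = m then ω (n : Fin d → ℤ) else 0

/-- Continuous functional calculus for real symmetric matrices:
`f(A) = Σ_i f(λ_i) ψ_i ψ_iᵀ` in an orthonormal eigenbasis (junk value `0` if `A` is not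
symmetric). -/
def matFC {N : Type*} [Fintype N] [DecidableEq N] (f : ℝ → ℝ) (A : Matrix N N ℝ) :
    Matrix N N ℝ :=
  if hA : A.IsHermitian then
    Matrix.of fun n m =>
      ∑ i, f (hA.eigenvalues i) * hA.eigenvectorBasis i n * hA.eigenvectorBasis i m
  else 0

/-- The centered, normalized linear eigenvalue statistic
`X_{f,L}(ω) = |Λ_L|^{-1/2} (Tr f(H^ω_L) - E[Tr f(H^ω_L)])`. -/
def XX (d L : ℕ) (Pr : Measure (Cfg d)) (f : ℝ → ℝ) (ω : Cfg d) : ℝ :=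
  (Real.sqrt ((cube d L).card))⁻¹ *
    ((matFC f (ham d L ω)).trace - ∫ ω', (matFC f (ham d L ω')).trace ∂Pr)

/-- The class `C¹_P(ℝ)`: differentiable functions with continuous derivative of at most
polynomial growth. -/
def CP1 (f : ℝ → ℝ) : Prop :=
  Differentiable ℝ f ∧ Continuous (deriv f) ∧ ∃ P : Polynomial ℝ, ∀ x, |deriv f x| ≤ P.eval x

/-- Hypothesis (M) on the single-site distribution. -/
def HypM (μ : Measure ℝ) : Prop :=
  (∀ k : ℕ, Integrable (fun x => |x| ^ k) μ) ∧
  ∃ C a : ℝ, 1 ≤ C ∧ 1 ≤ a ∧ ∀ k : ℕ, (∫ x, |x| ^ k ∂μ) ≤ C * a ^ k * (k : ℝ) ^ k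

/-- The coordinates `(ω_n)` are i.i.d. with common law `μ` under `Pr`. -/
def IID (d : ℕ) (μ : Measure ℝ) (Pr : Measure (Cfg d)) : Prop :=
  iIndepFun (fun (n : Fin d → ℤ) (ω : Cfg d) => ω n) Pr ∧
  ∀ n : Fin d → ℤ, Pr.map (fun ω => ω n) = μ

/-- `∫ g dν̄_{p,L}`, the integral against the modified finite-volume density of states
measure. -/
def nubarInt (d L p : ℕ) (Pr : Measure (Cfg d)) (g : ℝ → ℝ) : ℝ :=
  (((cube d L).card : ℝ))⁻¹ *
    ∑ n ∈ (cube d L).attach,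
      ∫ u in Set.Icc (0 : ℝ) 1,
        ∫ ω, (ω (n : Fin d → ℤ)) ^ (2 * p) *
          matFC g (ham d L (Function.update ω (n : Fin d → ℤ)
            (u * ω (n : Fin d → ℤ)))) n n ∂Pr

/-- Topological support of a measure on `ℝ`. -/
def msupport (μ : Measure ℝ) : Set ℝ :=
  {x | ∀ U : Set ℝ, IsOpen U → x ∈ U → μ U ≠ 0}

end

noncomputable section AndersonAux

namespace Anderson

variable {d : ℕ}

abbrev Pt (d : ℕ) := Fin d → ℤ

/-- immediate neighborhood (sup-ball of radius 1) -/
def nbhd (a : Pt d) : Finset (Pt d) := Fintype.piFinset fun i => Finset.Icc (a i - 1) (a i + 1)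

/-- sup-ball of radius q -/
def ballF (a : Pt d) (q : ℕ) : Finset (Pt d) :=
  Fintype.piFinset fun i => Finset.Icc (a i - q) (a i + q)

lemma mem_cube {L : ℕ} {x : Pt d} : x ∈ cube d L ↔ ∀ i, |x i| ≤ (L : ℤ) := by
  simp [cube, Fintype.mem_piFinset, Finset.mem_Icc, abs_le, and_comm, neg_le]

lemma mem_nbhd {a c : Pt d} : c ∈ nbhd a ↔ ∀ i, |c i - a i| ≤ 1 := by
  simp only [nbhd, Fintype.mem_piFinset, Finset.mem_Icc, abs_le]
  exact forall_congr' fun i => by omega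

lemma mem_ballF {a c : Pt d} {q : ℕ} : c ∈ ballF a q ↔ ∀ i, |c i - a i| ≤ (q : ℤ) := by
  simp only [ballF, Fintype.mem_piFinset, Finset.mem_Icc, abs_le]
  exact forall_congr' fun i => by omega

lemma ballF_mono {a : Pt d} {q q' : ℕ} (h : q ≤ q') : ballF a q ⊆ ballF a q' := by
  intro x hx
  rw [mem_ballF] at hx ⊢
  intro i
  exact le_trans (hx i) (by exact_mod_cast h)

lemma ballF_subset {a c : Pt d} {j : ℕ} (hc : c ∈ nbhd a) :
    ballF c j ⊆ ballF a (j + 1) := by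
  intro x hx
  rw [mem_ballF] at hx ⊢
  rw [mem_nbhd] at hc
  intro i
  calc |x i - a i| ≤ |x i - c i| + |c i - a i| := abs_sub_le _ _ _
    _ ≤ (j : ℤ) + 1 := add_le_add (hx i) (hc i)
    _ = ((j + 1 : ℕ) : ℤ) := by push_cast; ring

lemma self_mem_ballF {a : Pt d} {q : ℕ} : a ∈ ballF a q := by
  rw [mem_ballF]; intro i; simp

/-- hopping/potential kernel -/
def ed (ω : Cfg d) (a b : Pt d) : ℝ :=
  if (∑ i, |a i - b i|) = 1 then 1 else if a = b then ω a else 0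

lemma ed_eq_zero {ω : Cfg d} {a c : Pt d} (h : c ∉ nbhd a) : ed ω a c = 0 := by
  rw [ed, if_neg, if_neg]
  · rintro rfl
    exact h (mem_nbhd.2 fun i => by simp)
  · intro h1
    refine h (mem_nbhd.2 fun i => ?_)
    rw [abs_sub_comm]
    calc |a i - c i| ≤ ∑ j, |a j - c j| :=
          Finset.single_le_sum (f := fun j => |a j - c j|)
            (fun j _ => abs_nonneg _) (Finset.mem_univ i)
      _ = 1 := h1

lemma ed_congr {ω ω' : Cfg d} {a c : Pt d} (h : ω a = ω' a) : ed ω a c = ed ω' a c := by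
  rw [ed, ed, h]

lemma abs_ed {ω : Cfg d} {a c : Pt d} : |ed ω a c| = ed (fun x => |ω x|) a c := by
  rw [ed, ed]
  split_ifs <;> simp

lemma ed_nonneg {ω : Cfg d} (hω : ∀ x, 0 ≤ ω x) (a c : Pt d) : 0 ≤ ed ω a c := by
  rw [ed]; split_ifs <;> simp [hω]

/-- abstract (volume-independent) kernel powers -/
def K : ℕ → Cfg d → Pt d → Pt d → ℝ
  | 0, _, a, b => if a = b then 1 else 0
  | j + 1, ω, a, b => ∑ c ∈ nbhd a, ed ω a c * K j ω c b

lemma K_congr {ω ω' : Cfg d} : ∀ (j : ℕ) (a b : Pt d),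
    (∀ x ∈ ballF a j, ω x = ω' x) → K j ω a b = K j ω' a b
  | 0, a, b, _ => rfl
  | j + 1, a, b, h => by
    rw [K, K]
    refine Finset.sum_congr rfl fun c hc => ?_
    rw [ed_congr (h a self_mem_ballF),
      K_congr j c b fun x hx => h x (ballF_subset hc hx)]

lemma K_translate {ω : Cfg d} {t : Pt d} : ∀ (j : ℕ) (a b : Pt d),
    K j (fun x => ω (x + t)) a b = K j ω (a + t) (b + t)
  | 0, a, b => by
    rw [K, K]
    congr 1
    simp only [eq_iff_iff]
    constructor
    · rintro rfl; rfl
    · intro h; funext i; have := congrFun h i; simpa using this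
  | j + 1, a, b => by
    rw [K, K]
    refine Finset.sum_nbij' (fun c => c + t) (fun c => c - t) ?_ ?_ ?_ ?_ ?_
    · intro c hc
      rw [mem_nbhd] at hc ⊢
      intro i
      simpa using hc i
    · intro c hc
      rw [mem_nbhd] at hc ⊢
      intro i
      have h2 := hc i
      simp only [Pi.sub_apply, Pi.add_apply] at h2 ⊢
      have h3 : c i - t i - a i = c i - (a i + t i) := by ring
      rw [h3]
      exact h2
    · intro c _; simp
    · intro c _; simp
    · intro c hc
      have h1 : ed (fun x => ω (x + t)) a c = ed ω (a + t) (c + t) := by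
        rw [ed, ed]
        have e1 : (∑ i, |a i - c i|) = ∑ i, |(a + t) i - (c + t) i| := by
          refine Finset.sum_congr rfl fun i _ => ?_
          simp only [Pi.add_apply]
          congr 1
          ring
        have e2 : (a = c) = ((a + t) = (c + t)) := by
          simp only [eq_iff_iff]
          constructor
          · rintro rfl; rfl
          · intro h; funext i; have := congrFun h i; simpa using this
        rw [e1]
        exact if_congr Iff.rfl rfl (if_congr (iff_of_eq e2) rfl rfl)
      rw [h1, K_translate j c b]

lemma K_nonneg {ω : Cfg d} (hω : ∀ x, 0 ≤ ω x) : ∀ (j : ℕ) (a b : Pt d), 0 ≤ K j ω a b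
  | 0, a, b => by rw [K]; split_ifs <;> norm_num
  | j + 1, a, b => by
    rw [K]
    exact Finset.sum_nonneg fun c _ => mul_nonneg (ed_nonneg hω a c) (K_nonneg hω j c b)

lemma abs_K_le {ω : Cfg d} : ∀ (j : ℕ) (a b : Pt d),
    |K j ω a b| ≤ K j (fun x => |ω x|) a b
  | 0, a, b => by rw [K, K]; split_ifs <;> norm_num
  | j + 1, a, b => by
    rw [K, K]
    calc |∑ c ∈ nbhd a, ed ω a c * K j ω c b|
        ≤ ∑ c ∈ nbhd a, |ed ω a c * K j ω c b| := Finset.abs_sum_le_sum_abs _ _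
      _ ≤ ∑ c ∈ nbhd a, ed (fun x => |ω x|) a c * K j (fun x => |ω x|) c b := by
          refine Finset.sum_le_sum fun c _ => ?_
          rw [abs_mul, abs_ed]
          exact mul_le_mul_of_nonneg_left (abs_K_le j c b)
            (ed_nonneg (fun x => abs_nonneg _) a c)

end Anderson

namespace Anderson

variable {d : ℕ}

lemma ham_apply {L : ℕ} {ω : Cfg d} (n m : ↥(cube d L)) :
    ham d L ω n m = ed ω (↑n) (↑m) := by
  rw [ham, ed, Matrix.of_apply]
  exact if_congr Iff.rfl rfl (if_congr Subtype.ext_iff rfl rfl)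

lemma nbhd_subset_cube {L : ℕ} {n : Pt d} (hn : ∀ i, |n i| + 1 ≤ (L : ℤ)) :
    nbhd n ⊆ cube d L := by
  intro c hc
  rw [mem_nbhd] at hc
  rw [mem_cube]
  intro i
  have := hc i
  have := hn i
  have : |c i| ≤ |c i - n i| + |n i| := by
    calc |c i| = |(c i - n i) + n i| := by ring_nf
      _ ≤ |c i - n i| + |n i| := abs_add_le _ _
  omega

lemma sum_cube_coe {L : ℕ} (f : Pt d → ℝ) :
    (∑ c : ↥(cube d L), f (↑c : Pt d)) = ∑ x ∈ cube d L, f x := by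
  rw [Finset.univ_eq_attach, Finset.sum_attach]

lemma hamPow_eq_K {L : ℕ} {ω : Cfg d} (j : ℕ) : ∀ (n m : ↥(cube d L)),
    (∀ i, |(↑n : Pt d) i| + j ≤ (L : ℤ)) →
    (ham d L ω ^ j) n m = K j ω (↑n) (↑m) := by
  induction j with
  | zero =>
    intro n m _
    rw [pow_zero, K, Matrix.one_apply]
    exact if_congr Subtype.ext_iff rfl rfl
  | succ j ih =>
    intro n m hdeep
    rw [pow_succ', Matrix.mul_apply, K]
    have hsub : nbhd (↑n : Pt d) ⊆ cube d L := by
      refine nbhd_subset_cube fun i => ?_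
      have := hdeep i; omega
    have step : ∀ c : ↥(cube d L),
        ham d L ω n c * (ham d L ω ^ j) c m =
        (fun x => if hx : x ∈ nbhd (↑n : Pt d) then
            ed ω (↑n) x * K j ω x (↑m) else 0) (↑c : Pt d) := by
      intro c
      by_cases hc : (↑c : Pt d) ∈ nbhd (↑n : Pt d)
      · simp only [dif_pos hc]
        rw [ham_apply]
        congr 1
        refine ih c m fun i => ?_
        have h1 := (mem_nbhd.1 hc) i
        have h2 := hdeep i
        have : |(↑c : Pt d) i| ≤ |(↑c : Pt d) i - (↑n : Pt d) i| + |(↑n : Pt d) i| := by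
          calc |(↑c : Pt d) i| = |((↑c : Pt d) i - (↑n : Pt d) i) + (↑n : Pt d) i| := by ring_nf
            _ ≤ _ := abs_add_le _ _
        omega
      · simp only [dif_neg hc]
        rw [ham_apply, ed_eq_zero hc, zero_mul]
    calc (∑ c : ↥(cube d L), ham d L ω n c * (ham d L ω ^ j) c m)
        = ∑ c : ↥(cube d L), (fun x => if hx : x ∈ nbhd (↑n : Pt d) then
            ed ω (↑n) x * K j ω x (↑m) else 0) (↑c : Pt d) :=
          Finset.sum_congr rfl fun c _ => step c
      _ = ∑ x ∈ cube d L, (if hx : x ∈ nbhd (↑n : Pt d) then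
            ed ω (↑n) x * K j ω x (↑m) else 0) :=
          sum_cube_coe (fun x => if hx : x ∈ nbhd (↑n : Pt d) then
            ed ω (↑n) x * K j ω x (↑m) else 0)
      _ = ∑ x ∈ nbhd (↑n : Pt d), (if hx : x ∈ nbhd (↑n : Pt d) then
            ed ω (↑n) x * K j ω x (↑m) else 0) := by
          refine (Finset.sum_subset hsub fun x _ hx => dif_neg hx).symm
      _ = ∑ x ∈ nbhd (↑n : Pt d), ed ω (↑n) x * K j ω x (↑m) :=
          Finset.sum_congr rfl fun x hx => dif_pos hx

lemma abs_hamPow_le {L : ℕ} {ω : Cfg d} (j : ℕ) : ∀ (n m : ↥(cube d L)),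
    |(ham d L ω ^ j) n m| ≤ K j (fun x => |ω x|) (↑n) (↑m) := by
  induction j with
  | zero =>
    intro n m
    rw [pow_zero, K, Matrix.one_apply]
    split_ifs with h1 h2 h2
    · norm_num
    · exact absurd (Subtype.ext_iff.1 h1) h2
    · simp at h2; exact absurd h2 h1
    · norm_num
  | succ j ih =>
    intro n m
    rw [pow_succ', Matrix.mul_apply, K]
    set g : Pt d → ℝ := fun x => ed (fun y => |ω y|) (↑n) x * K j (fun y => |ω y|) x (↑m)
      with hg
    have hgnn : ∀ x, 0 ≤ g x := fun x =>
      mul_nonneg (ed_nonneg (fun y => abs_nonneg _) _ _)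
        (K_nonneg (fun y => abs_nonneg _) _ _ _)
    calc |∑ c : ↥(cube d L), ham d L ω n c * (ham d L ω ^ j) c m|
        ≤ ∑ c : ↥(cube d L), |ham d L ω n c * (ham d L ω ^ j) c m| :=
          Finset.abs_sum_le_sum_abs _ _
      _ ≤ ∑ c : ↥(cube d L), g (↑c : Pt d) := by
          refine Finset.sum_le_sum fun c _ => ?_
          rw [abs_mul, ham_apply, abs_ed, hg]
          exact mul_le_mul_of_nonneg_left (ih c m)
            (ed_nonneg (fun y => abs_nonneg _) _ _)
      _ = ∑ x ∈ cube d L, g x := sum_cube_coe g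
      _ = ∑ x ∈ cube d L ∩ nbhd (↑n : Pt d), g x := by
          refine (Finset.sum_subset Finset.inter_subset_left fun x _ hx => ?_).symm
          have : x ∉ nbhd (↑n : Pt d) := fun hmem =>
            hx (Finset.mem_inter.2 ⟨‹x ∈ cube d L›, hmem⟩)
          rw [hg]
          simp only []
          rw [ed_eq_zero this, zero_mul]
      _ ≤ ∑ x ∈ nbhd (↑n : Pt d), g x :=
          Finset.sum_le_sum_of_subset_of_nonneg Finset.inter_subset_right
            (fun x _ _ => hgnn x)

lemma hamPow_congr {L : ℕ} {ω ω' : Cfg d} (j : ℕ) : ∀ (n m : ↥(cube d L)),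
    (∀ x ∈ ballF (↑n : Pt d) j, ω x = ω' x) →
    (ham d L ω ^ j) n m = (ham d L ω' ^ j) n m := by
  induction j with
  | zero => intro n m _; rw [pow_zero, pow_zero]
  | succ j ih =>
    intro n m h
    rw [pow_succ', pow_succ', Matrix.mul_apply, Matrix.mul_apply]
    refine Finset.sum_congr rfl fun c _ => ?_
    by_cases hc : (↑c : Pt d) ∈ nbhd (↑n : Pt d)
    · rw [ham_apply, ham_apply, ed_congr (h _ self_mem_ballF),
        ih c m fun x hx => h x (ballF_subset hc hx)]
    · rw [ham_apply, ham_apply, ed_eq_zero hc, ed_eq_zero hc, zero_mul, zero_mul]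

end Anderson

namespace Anderson

variable {d : ℕ} {Pr : Measure (Cfg d)}

/-- functions with all moments finite -/
structure Nice (Pr : Measure (Cfg d)) (f : Cfg d → ℝ) : Prop where
  meas : Measurable f
  int : ∀ j : ℕ, Integrable (fun ω => |f ω| ^ j) Pr

lemma Nice.const [IsProbabilityMeasure Pr] (c : ℝ) : Nice Pr (fun _ => c) :=
  ⟨measurable_const, fun j => integrable_const _⟩

lemma Nice.integrable {f : Cfg d → ℝ} (hf : Nice Pr f) : Integrable f Pr := by
  have h := hf.int 1
  simp only [pow_one] at h
  exact h.mono' hf.meas.aestronglyMeasurable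
    (Filter.Eventually.of_forall fun ω => le_of_eq rfl)

lemma Nice.abs {f : Cfg d → ℝ} (hf : Nice Pr f) : Nice Pr (fun ω => |f ω|) :=
  ⟨hf.meas.abs, fun j => by simpa only [abs_abs] using hf.int j⟩

private lemma aux_amgm (a b : ℝ) (ha : 0 ≤ a) (hb : 0 ≤ b) (j : ℕ) :
    (a * b) ^ j ≤ (a ^ (2 * j) + b ^ (2 * j)) / 2 := by
  have h := two_mul_le_add_sq (a ^ j) (b ^ j)
  have e1 : (a ^ j) ^ 2 = a ^ (2 * j) := by rw [← pow_mul, mul_comm]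
  have e2 : (b ^ j) ^ 2 = b ^ (2 * j) := by rw [← pow_mul, mul_comm]
  rw [mul_pow]
  nlinarith [pow_nonneg ha j, pow_nonneg hb j]

lemma Nice.mul {f g : Cfg d → ℝ} (hf : Nice Pr f) (hg : Nice Pr g) :
    Nice Pr (fun ω => f ω * g ω) := by
  refine ⟨hf.meas.mul hg.meas, fun j => ?_⟩
  refine Integrable.mono' (((hf.int (2 * j)).add (hg.int (2 * j))).div_const 2)
    (((hf.meas.mul hg.meas).abs.pow_const j).aestronglyMeasurable) ?_
  refine Filter.Eventually.of_forall fun ω => ?_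
  have h1 : ‖(|f ω * g ω|) ^ j‖ = (|f ω| * |g ω|) ^ j := by
    rw [Real.norm_eq_abs, abs_pow, abs_abs, abs_mul]
  rw [h1]
  simp only [Pi.add_apply]
  exact aux_amgm _ _ (abs_nonneg _) (abs_nonneg _) j

private lemma aux_pow_add (a b : ℝ) (ha : 0 ≤ a) (hb : 0 ≤ b) (j : ℕ) :
    (a + b) ^ j ≤ 2 ^ j * (a ^ j + b ^ j) := by
  have h1 : a + b ≤ 2 * max a b := by
    rcases le_total a b with h | h
    · rw [max_eq_right h]; linarith
    · rw [max_eq_left h]; linarith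
  calc (a + b) ^ j ≤ (2 * max a b) ^ j :=
        pow_le_pow_left₀ (by positivity) h1 j
    _ = 2 ^ j * (max a b) ^ j := mul_pow _ _ _
    _ ≤ 2 ^ j * (a ^ j + b ^ j) := by
        refine mul_le_mul_of_nonneg_left ?_ (by positivity)
        rcases le_total a b with h | h
        · rw [max_eq_right h]
          nlinarith [pow_nonneg ha j, pow_nonneg hb j]
        · rw [max_eq_left h]
          nlinarith [pow_nonneg ha j, pow_nonneg hb j]

lemma Nice.add {f g : Cfg d → ℝ} (hf : Nice Pr f) (hg : Nice Pr g) :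
    Nice Pr (fun ω => f ω + g ω) := by
  refine ⟨hf.meas.add hg.meas, fun j => ?_⟩
  refine Integrable.mono' ((((hf.int j).add (hg.int j)).const_mul (2 ^ j)))
    (((hf.meas.add hg.meas).abs.pow_const j).aestronglyMeasurable) ?_
  refine Filter.Eventually.of_forall fun ω => ?_
  have h1 : ‖(|f ω + g ω|) ^ j‖ = |f ω + g ω| ^ j := by
    rw [Real.norm_eq_abs, abs_pow, abs_abs]
  rw [h1]
  simp only [Pi.add_apply]
  calc |f ω + g ω| ^ j ≤ (|f ω| + |g ω|) ^ j :=
        pow_le_pow_left₀ (abs_nonneg _) (abs_add_le _ _) j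
    _ ≤ 2 ^ j * (|f ω| ^ j + |g ω| ^ j) :=
        aux_pow_add _ _ (abs_nonneg _) (abs_nonneg _) j

lemma Nice.neg {f : Cfg d → ℝ} (hf : Nice Pr f) : Nice Pr (fun ω => -f ω) :=
  ⟨hf.meas.neg, fun j => by simpa only [abs_neg] using hf.int j⟩

lemma Nice.sum [IsProbabilityMeasure Pr] {ι : Type*} (s : Finset ι) (f : ι → Cfg d → ℝ)
    (h : ∀ i ∈ s, Nice Pr (f i)) : Nice Pr (fun ω => ∑ i ∈ s, f i ω) := by
  classical
  induction s using Finset.cons_induction with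
  | empty => simpa using Nice.const 0
  | cons a s ha ih =>
    simp only [Finset.sum_cons]
    exact (h a (Finset.mem_cons_self a s)).add
      (ih fun i hi => h i (Finset.mem_cons.2 (Or.inr hi)))

lemma Nice.const_mul {f : Cfg d → ℝ} (hf : Nice Pr f) (c : ℝ) [IsProbabilityMeasure Pr] :
    Nice Pr (fun ω => c * f ω) := (Nice.const c).mul hf

lemma Nice.integrable_mul {f g : Cfg d → ℝ} (hf : Nice Pr f) (hg : Nice Pr g) :
    Integrable (fun ω => f ω * g ω) Pr := (hf.mul hg).integrable

end Anderson


namespace Anderson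

variable {d : ℕ} {μ : Measure ℝ} {Pr : Measure (Cfg d)}

def shift (t : Pt d) (ω : Cfg d) : Cfg d := fun x => ω (x + t)

lemma measurable_shift (t : Pt d) : Measurable (shift (d := d) t) :=
  measurable_pi_lambda _ fun x => measurable_pi_apply _

lemma shift_shift (t u : Pt d) (ω : Cfg d) : shift t (shift u ω) = shift (t + u) ω := by
  funext x
  simp only [shift]
  congr 1
  funext i
  simp only [Pi.add_apply]
  ring

def res (S : Finset (Pt d)) : Cfg d → (↥S → ℝ) := fun ω i => ω ↑i

lemma measurable_res (S : Finset (Pt d)) : Measurable (res S) :=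
  measurable_pi_lambda _ fun i => measurable_pi_apply _

lemma mapRes [IsProbabilityMeasure μ] [IsProbabilityMeasure Pr]
    (hiid : IID d μ Pr) (S : Finset (Pt d)) :
    Pr.map (res S) = Measure.pi (fun _ : ↥S => μ) := by
  classical
  refine (Measure.pi_eq fun s hs => ?_).symm
  rw [Measure.map_apply (measurable_res S) (MeasurableSet.univ_pi hs)]
  set A : Pt d → Set ℝ := fun x => if h : x ∈ S then s ⟨x, h⟩ else Set.univ with hA
  have hpre : res S ⁻¹' Set.pi Set.univ s = ⋂ x ∈ S, (fun ω : Cfg d => ω x) ⁻¹' A x := by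
    ext ω
    simp only [Set.mem_preimage, Set.mem_univ_pi, Set.mem_iInter, res]
    constructor
    · intro h x hx
      simp only [hA, Set.mem_preimage, dif_pos hx]
      exact h ⟨x, hx⟩
    · intro h i
      have := h ↑i i.2
      simpa only [hA, Set.mem_preimage, dif_pos i.2, Subtype.eta] using this
  rw [hpre, hiid.1.measure_inter_preimage_eq_mul S (fun x hx => by
    simp only [hA, dif_pos hx]; exact hs _)]
  have hfac : ∀ x ∈ S, Pr ((fun ω : Cfg d => ω x) ⁻¹' A x) = μ (A x) := by
    intro x hx
    rw [← hiid.2 x, Measure.map_apply (measurable_pi_apply x)]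
    simp only [hA, dif_pos hx]
    exact hs _
  calc (∏ x ∈ S, Pr ((fun ω : Cfg d => ω x) ⁻¹' A x)) = ∏ x ∈ S, μ (A x) :=
        Finset.prod_congr rfl hfac
    _ = ∏ i : ↥S, μ (A ↑i) := by
        rw [Finset.univ_eq_attach]
        exact (Finset.prod_attach S fun x => μ (A x)).symm
    _ = ∏ i : ↥S, μ (s i) := by
        refine Finset.prod_congr rfl fun i _ => ?_
        simp only [hA, dif_pos i.2, Subtype.eta]

lemma mapShift [IsProbabilityMeasure μ] [IsProbabilityMeasure Pr]
    (hiid : IID d μ Pr) (t : Pt d) : Pr.map (shift t) = Pr := by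
  classical
  have hm : Measurable (shift (d := d) t) := measurable_shift t
  haveI : IsProbabilityMeasure (Pr.map (shift t)) :=
    Measure.isProbabilityMeasure_map hm.aemeasurable
  refine MeasureTheory.ext_of_generate_finite (measurableCylinders fun _ : Pt d => ℝ)
    generateFrom_measurableCylinders.symm isPiSystem_measurableCylinders
    (fun s hs => ?_) (by simp)
  obtain ⟨S, A, hA, rfl⟩ := (mem_measurableCylinders _).1 hs
  rw [Measure.map_apply hm hA.cylinder]
  set S' : Finset (Pt d) := S.image (· + t) with hS'
  have hmem : ∀ i : ↥S, (↑i + t) ∈ S' := fun i => Finset.mem_image_of_mem _ i.2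
  have hmem' : ∀ i' : ↥S', ((↑i' : Pt d) - t) ∈ S := by
    intro i'
    obtain ⟨a, ha, hae⟩ := Finset.mem_image.1 i'.2
    rw [← hae]
    simpa using ha
  set e : ↥S ≃ ↥S' :=
    { toFun := fun i => ⟨↑i + t, hmem i⟩
      invFun := fun i' => ⟨↑i' - t, hmem' i'⟩
      left_inv := fun i => by ext1; simp
      right_inv := fun i' => by ext1; simp } with he
  set ρ : (↥S' → ℝ) → (↥S → ℝ) := fun y i => y (e i) with hρ
  have hρmeas : Measurable ρ := measurable_pi_lambda _ fun i => measurable_pi_apply _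
  have hpre : shift t ⁻¹' (cylinder S A) = res S' ⁻¹' (ρ ⁻¹' A) := by
    ext ω
    simp only [Set.mem_preimage, cylinder]
    have : S.restrict (shift t ω) = ρ (res S' ω) := rfl
    rw [this]
  rw [hpre, ← Measure.map_apply (measurable_res S') (hρmeas hA),
    mapRes hiid S']
  have hMP : MeasurePreserving ρ (Measure.pi fun _ : ↥S' => μ)
      (Measure.pi fun _ : ↥S => μ) := by
    have h1 := MeasureTheory.measurePreserving_piCongrLeft
      (fun _ : ↥S => (μ : Measure ℝ)) e.symm
    have h2 : (MeasurableEquiv.piCongrLeft (fun _ : ↥S => ℝ) e.symm : (↥S' → ℝ) → (↥S → ℝ)) = ρ := by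
      funext y i
      rw [MeasurableEquiv.coe_piCongrLeft]
      conv_lhs => rw [show i = e.symm (e i) from (e.symm_apply_apply i).symm]
      rw [Equiv.piCongrLeft_apply_apply]
    rw [h2] at h1
    exact h1
  rw [hMP.measure_preimage hA.nullMeasurableSet]
  have : cylinder S A = res S ⁻¹' A := rfl
  rw [this, ← Measure.map_apply (measurable_res S) hA, mapRes hiid S]

lemma integral_shift [IsProbabilityMeasure μ] [IsProbabilityMeasure Pr]
    (hiid : IID d μ Pr) (t : Pt d) (f : Cfg d → ℝ)
    (hf : AEStronglyMeasurable f Pr) :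
    ∫ ω, f (shift t ω) ∂Pr = ∫ ω, f ω ∂Pr := by
  conv_rhs => rw [← mapShift hiid t]
  rw [integral_map (measurable_shift t).aemeasurable]
  rw [mapShift hiid t]
  exact hf

lemma Nice.comp_shift [IsProbabilityMeasure μ] [IsProbabilityMeasure Pr]
    (hiid : IID d μ Pr) (t : Pt d) {f : Cfg d → ℝ} (hf : Nice Pr f) :
    Nice Pr (fun ω => f (shift t ω)) := by
  refine ⟨hf.meas.comp (measurable_shift t), fun j => ?_⟩
  have h1 : Integrable (fun ω => |f ω| ^ j) (Pr.map (shift t)) := by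
    rw [mapShift hiid t]; exact hf.int j
  have := (integrable_map_measure
    (by rw [mapShift hiid t]; exact (hf.int j).aestronglyMeasurable)
    (measurable_shift t).aemeasurable).1 h1
  exact this

def extS (S : Finset (Pt d)) (y : ↥S → ℝ) : Cfg d :=
  fun x => if h : x ∈ S then y ⟨x, h⟩ else 0

lemma measurable_extS (S : Finset (Pt d)) : Measurable (extS S) := by
  refine measurable_pi_lambda _ fun x => ?_
  by_cases h : x ∈ S
  · simp only [extS, dif_pos h]
    exact measurable_pi_apply _
  · simp only [extS, dif_neg h]
    exact measurable_const

lemma indep_integral_mul [IsProbabilityMeasure Pr]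
    (hiid : IID d μ Pr) {f g : Cfg d → ℝ} {Sf Sg : Finset (Pt d)}
    (hdis : Disjoint Sf Sg) (hf : Nice Pr f) (hg : Nice Pr g)
    (hfl : ∀ ω ω' : Cfg d, (∀ x ∈ Sf, ω x = ω' x) → f ω = f ω')
    (hgl : ∀ ω ω' : Cfg d, (∀ x ∈ Sg, ω x = ω' x) → g ω = g ω') :
    ∫ ω, f ω * g ω ∂Pr = (∫ ω, f ω ∂Pr) * ∫ ω, g ω ∂Pr := by
  classical
  have hFf : ∀ ω, f ω = (f ∘ extS Sf) ((fun ω (i : ↥Sf) => ω ↑i) ω) := by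
    intro ω
    refine hfl ω _ fun x hx => ?_
    simp only [Function.comp, extS, dif_pos hx]
  have hGg : ∀ ω, g ω = (g ∘ extS Sg) ((fun ω (i : ↥Sg) => ω ↑i) ω) := by
    intro ω
    refine hgl ω _ fun x hx => ?_
    simp only [Function.comp, extS, dif_pos hx]
  have hind : IndepFun f g Pr := by
    have h0 := (hiid.1.indepFun_finset Sf Sg hdis
      (fun x => measurable_pi_apply x)).comp
      (hf.meas.comp (measurable_extS Sf)) (hg.meas.comp (measurable_extS Sg))
    have e1 : (f ∘ extS Sf) ∘ (fun ω (i : ↥Sf) => ω ↑i) = f := funext fun ω => (hFf ω).symm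
    have e2 : (g ∘ extS Sg) ∘ (fun ω (i : ↥Sg) => ω ↑i) = g := funext fun ω => (hGg ω).symm
    rwa [e1, e2] at h0
  have := IndepFun.integral_mul_eq_mul_integral hind hf.integrable.aestronglyMeasurable hg.integrable.aestronglyMeasurable
  simpa using this

end Anderson

namespace Anderson

variable {d : ℕ} {Pr : Measure (Cfg d)}

/-- diagonal entry of `P(H_L)` at an ambient point (0 outside the cube) -/
def Damb (d L : ℕ) (P : Polynomial ℝ) (x : Pt d) (ω : Cfg d) : ℝ :=
  if h : x ∈ cube d L then (Polynomial.aeval (ham d L ω) P) ⟨x, h⟩ ⟨x, h⟩ else 0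

/-- infinite-volume diagonal entry at the origin -/
def Ffun (d : ℕ) (P : Polynomial ℝ) (ω : Cfg d) : ℝ :=
  ∑ j ∈ Finset.range (P.natDegree + 1), P.coeff j * K j ω 0 0

/-- nonnegative majorant -/
def Fbar (d : ℕ) (P : Polynomial ℝ) (ω : Cfg d) : ℝ :=
  ∑ j ∈ Finset.range (P.natDegree + 1), |P.coeff j| * K j (fun x => |ω x|) 0 0

lemma aeval_entry {N : Type*} [Fintype N] [DecidableEq N] (P : Polynomial ℝ)
    (A : Matrix N N ℝ) (n m : N) :
    (Polynomial.aeval A P) n m =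
      ∑ j ∈ Finset.range (P.natDegree + 1), P.coeff j * (A ^ j) n m := by
  rw [Polynomial.aeval_eq_sum_range]
  rw [Matrix.sum_apply]
  refine Finset.sum_congr rfl fun j _ => ?_
  rw [Matrix.smul_apply, smul_eq_mul]

lemma Damb_of_mem {L : ℕ} {P : Polynomial ℝ} {x : Pt d} (h : x ∈ cube d L) (ω : Cfg d) :
    Damb d L P x ω =
      ∑ j ∈ Finset.range (P.natDegree + 1),
        P.coeff j * (ham d L ω ^ j) ⟨x, h⟩ ⟨x, h⟩ := by
  rw [Damb, dif_pos h, aeval_entry]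

lemma Damb_deep {L : ℕ} {P : Polynomial ℝ} {x : Pt d} (h : x ∈ cube d L)
    (hdeep : ∀ i, |x i| + P.natDegree ≤ (L : ℤ)) (ω : Cfg d) :
    Damb d L P x ω = Ffun d P (shift x ω) := by
  rw [Damb_of_mem h, Ffun]
  refine Finset.sum_congr rfl fun j hj => ?_
  have hj' : j ≤ P.natDegree := Nat.lt_succ_iff.1 (Finset.mem_range.1 hj)
  congr 1
  have h2 := K_translate (ω := ω) (t := x) (j := j) 0 0
  simp only [zero_add] at h2
  rw [show K j (shift x ω) 0 0 = K j ω x x from h2]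
  refine hamPow_eq_K j ⟨x, h⟩ ⟨x, h⟩ fun i => ?_
  show |x i| + (j : ℤ) ≤ (L : ℤ)
  have ha := hdeep i
  have hb : (j : ℤ) ≤ (P.natDegree : ℤ) := by exact_mod_cast hj'
  omega

lemma Fbar_nonneg (P : Polynomial ℝ) (ω : Cfg d) : 0 ≤ Fbar d P ω :=
  Finset.sum_nonneg fun j _ => mul_nonneg (abs_nonneg _)
    (K_nonneg (fun x => abs_nonneg _) j 0 0)

lemma abs_Ffun_le (P : Polynomial ℝ) (ω : Cfg d) : |Ffun d P ω| ≤ Fbar d P ω := by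
  rw [Ffun, Fbar]
  calc |∑ j ∈ Finset.range (P.natDegree + 1), P.coeff j * K j ω 0 0|
      ≤ ∑ j ∈ Finset.range (P.natDegree + 1), |P.coeff j * K j ω 0 0| :=
        Finset.abs_sum_le_sum_abs _ _
    _ ≤ _ := by
        refine Finset.sum_le_sum fun j _ => ?_
        rw [abs_mul]
        exact mul_le_mul_of_nonneg_left (abs_K_le j 0 0) (abs_nonneg _)

lemma Fbar_shift (P : Polynomial ℝ) (x : Pt d) (ω : Cfg d) :
    Fbar d P (shift x ω) =
      ∑ j ∈ Finset.range (P.natDegree + 1), |P.coeff j| * K j (fun y => |ω y|) x x := by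
  rw [Fbar]
  refine Finset.sum_congr rfl fun j _ => ?_
  congr 1
  have h2 := K_translate (ω := fun z => |ω z|) (t := x) (j := j) 0 0
  simp only [zero_add] at h2
  exact h2

lemma abs_Damb_le {L : ℕ} (P : Polynomial ℝ) (x : Pt d) (ω : Cfg d) :
    |Damb d L P x ω| ≤ Fbar d P (shift x ω) := by
  by_cases h : x ∈ cube d L
  · rw [Damb_of_mem h, Fbar_shift]
    calc |∑ j ∈ Finset.range (P.natDegree + 1),
          P.coeff j * (ham d L ω ^ j) ⟨x, h⟩ ⟨x, h⟩|
        ≤ ∑ j ∈ Finset.range (P.natDegree + 1),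
          |P.coeff j * (ham d L ω ^ j) ⟨x, h⟩ ⟨x, h⟩| := Finset.abs_sum_le_sum_abs _ _
      _ ≤ _ := by
          refine Finset.sum_le_sum fun j _ => ?_
          rw [abs_mul]
          exact mul_le_mul_of_nonneg_left (abs_hamPow_le j ⟨x, h⟩ ⟨x, h⟩) (abs_nonneg _)
  · rw [Damb, dif_neg h]
    simpa using Fbar_nonneg P (shift x ω)

lemma Damb_local {L : ℕ} {P : Polynomial ℝ} {x : Pt d} {ω ω' : Cfg d}
    (h : ∀ y ∈ ballF x P.natDegree, ω y = ω' y) :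
    Damb d L P x ω = Damb d L P x ω' := by
  by_cases hx : x ∈ cube d L
  · rw [Damb_of_mem hx, Damb_of_mem hx]
    refine Finset.sum_congr rfl fun j hj => ?_
    congr 1
    exact hamPow_congr j ⟨x, hx⟩ ⟨x, hx⟩ fun y hy =>
      h y (ballF_mono (Nat.lt_succ_iff.1 (Finset.mem_range.1 hj)) hy)
  · rw [Damb, Damb, dif_neg hx, dif_neg hx]

lemma Ffun_local {P : Polynomial ℝ} {ω ω' : Cfg d}
    (h : ∀ y ∈ ballF (0 : Pt d) P.natDegree, ω y = ω' y) :
    Ffun d P ω = Ffun d P ω' := by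
  rw [Ffun, Ffun]
  refine Finset.sum_congr rfl fun j hj => ?_
  congr 1
  exact K_congr j 0 0 fun y hy =>
    h y (ballF_mono (Nat.lt_succ_iff.1 (Finset.mem_range.1 hj)) hy)

lemma Ffun_shift_local {P : Polynomial ℝ} {x : Pt d} {ω ω' : Cfg d}
    (h : ∀ y ∈ ballF x P.natDegree, ω y = ω' y) :
    Ffun d P (shift x ω) = Ffun d P (shift x ω') := by
  refine Ffun_local fun y hy => ?_
  rw [shift, shift]
  refine h (y + x) ?_
  rw [mem_ballF] at hy ⊢
  intro i
  simpa using hy i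

section NiceLemmas

variable [IsProbabilityMeasure Pr]

lemma nice_ed (hco : ∀ x : Pt d, Nice Pr (fun ω => ω x))
    (tr : Cfg d → Cfg d) (htr : ∀ y, Nice Pr (fun ω => tr ω y)) (a c : Pt d) :
    Nice Pr (fun ω => ed (tr ω) a c) := by
  by_cases h1 : (∑ i, |a i - c i|) = 1
  · simp only [ed, if_pos h1]
    exact Nice.const 1
  · by_cases h2 : a = c
    · simp only [ed, if_neg h1, if_pos h2]
      exact htr a
    · simp only [ed, if_neg h1, if_neg h2]
      exact Nice.const 0

lemma nice_K (hco : ∀ x : Pt d, Nice Pr (fun ω => ω x))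
    (tr : Cfg d → Cfg d) (htr : ∀ y, Nice Pr (fun ω => tr ω y)) (j : ℕ) :
    ∀ a b : Pt d, Nice Pr (fun ω => K j (tr ω) a b) := by
  induction j with
  | zero =>
    intro a b
    simp only [K]
    split_ifs
    · exact Nice.const 1
    · exact Nice.const 0
  | succ j ih =>
    intro a b
    simp only [K]
    exact Nice.sum _ _ fun c _ => (nice_ed hco tr htr a c).mul (ih c b)

lemma nice_hamPow (hco : ∀ x : Pt d, Nice Pr (fun ω => ω x)) {L : ℕ} (j : ℕ) :
    ∀ n m : ↥(cube d L), Nice Pr (fun ω => (ham d L ω ^ j) n m) := by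
  induction j with
  | zero =>
    intro n m
    have : (fun ω : Cfg d => (ham d L ω ^ 0) n m) =
        fun _ => ((1 : Matrix (↥(cube d L)) (↥(cube d L)) ℝ) n m) := by
      funext ω; rw [pow_zero]
    rw [this]
    exact Nice.const _
  | succ j ih =>
    intro n m
    have : (fun ω => (ham d L ω ^ (j + 1)) n m) =
        fun ω => ∑ c : ↥(cube d L), ed ω (↑n) (↑c) * (ham d L ω ^ j) c m := by
      funext ω
      rw [pow_succ', Matrix.mul_apply]
      exact Finset.sum_congr rfl fun c _ => by rw [ham_apply]
    rw [this]
    exact Nice.sum _ _ fun c _ =>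
      (nice_ed hco id hco (↑n) (↑c)).mul (ih c m)

lemma nice_Damb (hco : ∀ x : Pt d, Nice Pr (fun ω => ω x)) {L : ℕ}
    (P : Polynomial ℝ) (x : Pt d) : Nice Pr (Damb d L P x) := by
  by_cases h : x ∈ cube d L
  · have : Damb d L P x = fun ω => ∑ j ∈ Finset.range (P.natDegree + 1),
        P.coeff j * (ham d L ω ^ j) ⟨x, h⟩ ⟨x, h⟩ := funext fun ω => Damb_of_mem h ω
    rw [this]
    exact Nice.sum _ _ fun j _ => (nice_hamPow hco j _ _).const_mul _
  · have : Damb d L P x = fun _ => (0 : ℝ) := funext fun ω => by rw [Damb, dif_neg h]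
    rw [this]
    exact Nice.const 0

lemma nice_Ffun (hco : ∀ x : Pt d, Nice Pr (fun ω => ω x)) (P : Polynomial ℝ) :
    Nice Pr (Ffun d P) :=
  Nice.sum _ _ fun j _ => ((nice_K hco id hco j 0 0).const_mul _)

lemma nice_Fbar (hco : ∀ x : Pt d, Nice Pr (fun ω => ω x)) (P : Polynomial ℝ) :
    Nice Pr (Fbar d P) :=
  Nice.sum _ _ fun j _ =>
    ((nice_K hco (fun ω x => |ω x|) (fun y => (hco y).abs) j 0 0).const_mul _)

end NiceLemmas

lemma trace_eq_sum_Damb {L : ℕ} (P : Polynomial ℝ) (ω : Cfg d) :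
    (Polynomial.aeval (ham d L ω) P).trace = ∑ x ∈ cube d L, Damb d L P x ω := by
  have key : ∀ n : ↥(cube d L),
      (Polynomial.aeval (ham d L ω) P) n n = Damb d L P (↑n) ω := by
    intro n
    rw [Damb, dif_pos n.2]
  rw [Matrix.trace]
  rw [show ∀ (A : Matrix (↥(cube d L)) (↥(cube d L)) ℝ), A.diag = fun n => A n n from fun A => rfl]
  rw [show (fun n : ↥(cube d L) => (Polynomial.aeval (ham d L ω) P) n n)
      = fun n : ↥(cube d L) => Damb d L P (↑n) ω from funext key]
  exact sum_cube_coe (fun x => Damb d L P x ω)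

section Expectations

variable {d : ℕ} {μ : Measure ℝ} {Pr : Measure (Cfg d)}
  [IsProbabilityMeasure μ] [IsProbabilityMeasure Pr]

lemma nice_coord (hiid : IID d μ Pr)
    (hmom : ∀ k : ℕ, Integrable (fun x => |x| ^ k) μ) (x : Pt d) :
    Nice Pr (fun ω => ω x) := by
  refine ⟨measurable_pi_apply x, fun j => ?_⟩
  have h1 : Integrable (fun u : ℝ => |u| ^ j) (Pr.map (fun ω : Cfg d => ω x)) := by
    rw [hiid.2 x]; exact hmom j
  exact (integrable_map_measure
    (by rw [hiid.2 x]; exact (hmom j).aestronglyMeasurable)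
    (measurable_pi_apply x).aemeasurable).1 h1

/-- mean of F -/
def m1V (Pr : Measure (Cfg d)) (P : Polynomial ℝ) : ℝ := ∫ ω, Ffun d P ω ∂Pr

/-- second moment at displacement x -/
def M2V (Pr : Measure (Cfg d)) (P : Polynomial ℝ) (x : Pt d) : ℝ :=
  ∫ ω, Ffun d P ω * Ffun d P (shift x ω) ∂Pr

/-- limiting covariance function -/
def cfV (Pr : Measure (Cfg d)) (P : Polynomial ℝ) (x : Pt d) : ℝ :=
  M2V Pr P x - m1V Pr P * m1V Pr P

/-- the limiting variance -/
def sV (Pr : Measure (Cfg d)) (P : Polynomial ℝ) : ℝ :=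
  ∑ z ∈ ballF (0 : Pt d) (2 * P.natDegree), cfV Pr P z

/-- finite-volume covariance of diagonal entries -/
def CovD (Pr : Measure (Cfg d)) (L : ℕ) (P : Polynomial ℝ) (x y : Pt d) : ℝ :=
  (∫ ω, Damb d L P x ω * Damb d L P y ω ∂Pr) -
    (∫ ω, Damb d L P x ω ∂Pr) * (∫ ω, Damb d L P y ω ∂Pr)

variable (hiid : IID d μ Pr) (hco : ∀ x : Pt d, Nice Pr (fun ω => ω x))
  (P : Polynomial ℝ)

lemma ballF_disjoint {x y : Pt d} {q : ℕ} {i : Fin d} (h : 2 * (q : ℤ) < |x i - y i|) :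
    Disjoint (ballF x q) (ballF y q) := by
  rw [Finset.disjoint_left]
  intro z hzx hzy
  have h1 := (mem_ballF.1 hzx) i
  have h2 := (mem_ballF.1 hzy) i
  have : |x i - y i| ≤ |z i - x i| + |z i - y i| := by
    have := abs_sub_abs_le_abs_sub (x i - z i) (y i - z i)
    calc |x i - y i| = |(x i - z i) - (y i - z i)| := by ring_nf
      _ ≤ |x i - z i| + |y i - z i| := abs_sub _ _
      _ = |z i - x i| + |z i - y i| := by rw [abs_sub_comm (x i), abs_sub_comm (y i)]
  omega

section WithHyp
include hiid hco

lemma int_Damb_deep {L : ℕ} {x : Pt d} (hx : x ∈ cube d L)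
    (hdeep : ∀ i, |x i| + P.natDegree ≤ (L : ℤ)) :
    ∫ ω, Damb d L P x ω ∂Pr = m1V Pr P := by
  rw [show (fun ω => Damb d L P x ω) = fun ω => Ffun d P (shift x ω) from
    funext fun ω => Damb_deep hx hdeep ω]
  exact integral_shift hiid x (Ffun d P) (nice_Ffun hco P).meas.aestronglyMeasurable

lemma int_mul_Damb_deep {L : ℕ} {x y : Pt d} (hx : x ∈ cube d L) (hy : y ∈ cube d L)
    (hdx : ∀ i, |x i| + P.natDegree ≤ (L : ℤ))
    (hdy : ∀ i, |y i| + P.natDegree ≤ (L : ℤ)) :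
    ∫ ω, Damb d L P x ω * Damb d L P y ω ∂Pr = M2V Pr P (y - x) := by
  have key : ∀ ω, Damb d L P x ω * Damb d L P y ω =
      (fun ω' => Ffun d P ω' * Ffun d P (shift (y - x) ω')) (shift x ω) := by
    intro ω
    have h1 : Damb d L P x ω = Ffun d P (shift x ω) := Damb_deep hx hdx ω
    have h2 : Damb d L P y ω = Ffun d P (shift y ω) := Damb_deep hy hdy ω
    have h3 : shift (y - x) (shift x ω) = shift y ω := by
      rw [shift_shift, sub_add_cancel]
    rw [h1, h2, ← h3]
  rw [show (fun ω => Damb d L P x ω * Damb d L P y ω) =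
      fun ω => (fun ω' => Ffun d P ω' * Ffun d P (shift (y - x) ω')) (shift x ω) from
    funext key]
  exact integral_shift hiid x _
    ((nice_Ffun hco P).meas.mul
      ((nice_Ffun hco P).meas.comp (measurable_shift (y - x)))).aestronglyMeasurable

lemma CovD_deep {L : ℕ} {x y : Pt d} (hx : x ∈ cube d L) (hy : y ∈ cube d L)
    (hdx : ∀ i, |x i| + P.natDegree ≤ (L : ℤ))
    (hdy : ∀ i, |y i| + P.natDegree ≤ (L : ℤ)) :
    CovD Pr L P x y = cfV Pr P (y - x) := by
  rw [CovD, cfV, M2V, int_mul_Damb_deep hiid hco P hx hy hdx hdy,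
    int_Damb_deep hiid hco P hx hdx, int_Damb_deep hiid hco P hy hdy, M2V]

lemma CovD_vanish {L : ℕ} {x y : Pt d} {i : Fin d}
    (hsep : 2 * (P.natDegree : ℤ) < |x i - y i|) :
    CovD Pr L P x y = 0 := by
  rw [CovD, indep_integral_mul hiid (ballF_disjoint hsep)
    (nice_Damb hco P x) (nice_Damb hco P y)
    (fun ω ω' h => Damb_local fun z hz => h z hz)
    (fun ω ω' h => Damb_local fun z hz => h z hz), sub_self]

lemma cfV_vanish {z : Pt d} {i : Fin d}
    (hsep : 2 * (P.natDegree : ℤ) < |z i|) :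
    cfV Pr P z = 0 := by
  have hdis : Disjoint (ballF (0 : Pt d) P.natDegree) (ballF z P.natDegree) :=
    ballF_disjoint (i := i) (by simpa using hsep)
  have hint : ∫ ω, Ffun d P (shift z ω) ∂Pr = m1V Pr P :=
    integral_shift hiid z (Ffun d P) (nice_Ffun hco P).meas.aestronglyMeasurable
  rw [cfV, M2V, indep_integral_mul hiid hdis (nice_Ffun hco P)
    (Nice.comp_shift hiid z (nice_Ffun hco P))
    (fun ω ω' h => Ffun_local fun y hy => h y hy)
    (fun ω ω' h => Ffun_shift_local fun y hy => h y hy), hint, m1V, sub_self]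

end WithHyp

end Expectations


section Bounds

variable {d : ℕ} {μ : Measure ℝ} {Pr : Measure (Cfg d)}
  [IsProbabilityMeasure μ] [IsProbabilityMeasure Pr]

variable (hiid : IID d μ Pr) (hco : ∀ x : Pt d, Nice Pr (fun ω => ω x))
  (P : Polynomial ℝ)

/-- first moment bound -/
def B1 (Pr : Measure (Cfg d)) (P : Polynomial ℝ) : ℝ := ∫ ω, Fbar d P ω ∂Pr

/-- second moment bound -/
def B2 (Pr : Measure (Cfg d)) (P : Polynomial ℝ) : ℝ := ∫ ω, (Fbar d P ω) ^ 2 ∂Pr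

include hiid hco

lemma B1_nonneg : 0 ≤ B1 Pr P :=
  integral_nonneg fun ω => Fbar_nonneg P ω

lemma B2_nonneg : 0 ≤ B2 Pr P :=
  integral_nonneg fun ω => pow_nonneg (Fbar_nonneg P ω) 2

lemma abs_int_Damb_le {L : ℕ} (x : Pt d) :
    |∫ ω, Damb d L P x ω ∂Pr| ≤ B1 Pr P := by
  have hFsh : Nice Pr (fun ω => Fbar d P (shift x ω)) :=
    Nice.comp_shift hiid x (nice_Fbar hco P)
  calc |∫ ω, Damb d L P x ω ∂Pr| ≤ ∫ ω, |Damb d L P x ω| ∂Pr := by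
        simpa [Real.norm_eq_abs] using
          norm_integral_le_integral_norm (μ := Pr) (fun ω => Damb d L P x ω)
    _ ≤ ∫ ω, Fbar d P (shift x ω) ∂Pr := by
        refine integral_mono (nice_Damb hco P x).abs.integrable hFsh.integrable ?_
        intro ω
        exact abs_Damb_le P x ω
    _ = B1 Pr P := integral_shift hiid x (Fbar d P)
        (nice_Fbar hco P).meas.aestronglyMeasurable

lemma abs_int_mul_Damb_le {L : ℕ} (x y : Pt d) :
    |∫ ω, Damb d L P x ω * Damb d L P y ω ∂Pr| ≤ B2 Pr P := by
  have hFx : Nice Pr (fun ω => Fbar d P (shift x ω)) :=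
    Nice.comp_shift hiid x (nice_Fbar hco P)
  have hFy : Nice Pr (fun ω => Fbar d P (shift y ω)) :=
    Nice.comp_shift hiid y (nice_Fbar hco P)
  have hInt : ∀ z : Pt d, ∫ ω, (Fbar d P (shift z ω)) ^ 2 ∂Pr = B2 Pr P := by
    intro z
    exact integral_shift hiid z (fun ω => (Fbar d P ω) ^ 2)
      ((nice_Fbar hco P).meas.pow_const 2).aestronglyMeasurable
  have hFx2 : Nice Pr (fun ω => (Fbar d P (shift x ω)) ^ 2) := by
    have h := hFx.mul hFx
    rwa [show (fun ω => Fbar d P (shift x ω) * Fbar d P (shift x ω)) =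
      fun ω => (Fbar d P (shift x ω)) ^ 2 from funext fun ω => (sq _).symm] at h
  have hFy2 : Nice Pr (fun ω => (Fbar d P (shift y ω)) ^ 2) := by
    have h := hFy.mul hFy
    rwa [show (fun ω => Fbar d P (shift y ω) * Fbar d P (shift y ω)) =
      fun ω => (Fbar d P (shift y ω)) ^ 2 from funext fun ω => (sq _).symm] at h
  calc |∫ ω, Damb d L P x ω * Damb d L P y ω ∂Pr|
      ≤ ∫ ω, |Damb d L P x ω| * |Damb d L P y ω| ∂Pr := by
        simpa [Real.norm_eq_abs] using
          norm_integral_le_integral_norm (μ := Pr) (fun ω => Damb d L P x ω * Damb d L P y ω)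
    _ ≤ ∫ ω, ((Fbar d P (shift x ω)) ^ 2 + (Fbar d P (shift y ω)) ^ 2) / 2 ∂Pr := by
        refine integral_mono ((nice_Damb hco P x).abs.mul (nice_Damb hco P y).abs).integrable
          ((hFx2.add hFy2).integrable.div_const 2) ?_
        intro ω
        have h1 : |Damb d L P x ω| * |Damb d L P y ω| ≤
            Fbar d P (shift x ω) * Fbar d P (shift y ω) :=
          mul_le_mul (abs_Damb_le (L := L) P x ω) (abs_Damb_le (L := L) P y ω)
            (abs_nonneg _) (le_trans (abs_nonneg _) (abs_Damb_le (L := L) P x ω))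
        have h2 := two_mul_le_add_sq (Fbar d P (shift x ω)) (Fbar d P (shift y ω))
        show |Damb d L P x ω| * |Damb d L P y ω| ≤
          (Fbar d P (shift x ω) ^ 2 + Fbar d P (shift y ω) ^ 2) / 2
        linarith
    _ = (B2 Pr P + B2 Pr P) / 2 := by
        rw [integral_div, integral_add hFx2.integrable hFy2.integrable,
          hInt x, hInt y]
    _ = B2 Pr P := by ring

lemma abs_CovD_le {L : ℕ} (x y : Pt d) :
    |CovD Pr L P x y| ≤ B2 Pr P + B1 Pr P * B1 Pr P := by
  rw [CovD]
  calc |(∫ ω, Damb d L P x ω * Damb d L P y ω ∂Pr) -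
        (∫ ω, Damb d L P x ω ∂Pr) * ∫ ω, Damb d L P y ω ∂Pr|
      ≤ |∫ ω, Damb d L P x ω * Damb d L P y ω ∂Pr| +
        |(∫ ω, Damb d L P x ω ∂Pr) * ∫ ω, Damb d L P y ω ∂Pr| := abs_sub _ _
    _ ≤ B2 Pr P + B1 Pr P * B1 Pr P := by
        refine add_le_add (abs_int_mul_Damb_le hiid hco P x y) ?_
        rw [abs_mul]
        exact mul_le_mul (abs_int_Damb_le hiid hco P x) (abs_int_Damb_le hiid hco P y)
          (abs_nonneg _) (B1_nonneg hiid hco P)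

end Bounds


section RowSums

variable {d : ℕ} {μ : Measure ℝ} {Pr : Measure (Cfg d)}
  [IsProbabilityMeasure μ] [IsProbabilityMeasure Pr]

variable (hiid : IID d μ Pr) (hco : ∀ x : Pt d, Nice Pr (fun ω => ω x))
  (P : Polynomial ℝ)

lemma mem_ballF_sub {x y : Pt d} {q : ℕ} : y ∈ ballF x q ↔ y - x ∈ ballF (0 : Pt d) q := by
  rw [mem_ballF, mem_ballF]
  refine forall_congr' fun i => ?_
  simp only [Pi.sub_apply, Pi.zero_apply, sub_zero]

include hiid hco

lemma row_sum_deep {L : ℕ} {x : Pt d} (hx : x ∈ cube d L)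
    (hdeep : ∀ i, |x i| + 3 * P.natDegree ≤ (L : ℤ)) :
    ∑ y ∈ cube d L, CovD Pr L P x y = sV Pr P := by
  set k := P.natDegree with hk
  have hsub : ballF x (2 * k) ⊆ cube d L := by
    intro y hy
    rw [mem_ballF] at hy
    rw [mem_cube]
    intro i
    have h1 := hy i
    have h2 := hdeep i
    have h3 : |y i| ≤ |y i - x i| + |x i| := by
      calc |y i| = |(y i - x i) + x i| := by ring_nf
        _ ≤ _ := abs_add_le _ _
    have h4 : ((2 * k : ℕ) : ℤ) = 2 * (k : ℤ) := by push_cast; ring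
    omega
  have step1 : ∑ y ∈ cube d L, CovD Pr L P x y = ∑ y ∈ ballF x (2 * k), CovD Pr L P x y := by
    refine (Finset.sum_subset hsub fun y hy hyn => ?_).symm
    rw [mem_ballF] at hyn
    push_neg at hyn
    obtain ⟨i, hi⟩ := hyn
    refine CovD_vanish hiid hco P (i := i) ?_
    rw [abs_sub_comm]
    have h4 : ((2 * k : ℕ) : ℤ) = 2 * (k : ℤ) := by push_cast; ring
    omega
  have step2 : ∀ y ∈ ballF x (2 * k), CovD Pr L P x y = cfV Pr P (y - x) := by
    intro y hy
    rw [mem_ballF] at hy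
    refine CovD_deep hiid hco P hx (hsub (mem_ballF.2 hy)) ?_ ?_
    · intro i
      have := hdeep i
      omega
    · intro i
      have h1 := hy i
      have h2 := hdeep i
      have h3 : |y i| ≤ |y i - x i| + |x i| := by
        calc |y i| = |(y i - x i) + x i| := by ring_nf
          _ ≤ _ := abs_add_le _ _
      have h4 : ((2 * k : ℕ) : ℤ) = 2 * (k : ℤ) := by push_cast; ring
      omega
  rw [step1, Finset.sum_congr rfl step2, sV]
  refine Finset.sum_nbij' (fun y => y - x) (fun z => z + x) ?_ ?_ ?_ ?_ ?_
  · intro y hy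
    exact mem_ballF_sub.1 hy
  · intro z hz
    refine mem_ballF_sub.2 ?_
    simpa using hz
  · intro y _; simp
  · intro z _; simp
  · intro y _; rfl

lemma row_sum_bound {L : ℕ} (x : Pt d) :
    |∑ y ∈ cube d L, CovD Pr L P x y| ≤
      ((2 * (2 * P.natDegree) + 1) ^ d : ℕ) * (B2 Pr P + B1 Pr P * B1 Pr P) := by
  set k := P.natDegree with hk
  have step1 : ∑ y ∈ cube d L, CovD Pr L P x y
      = ∑ y ∈ cube d L ∩ ballF x (2 * k), CovD Pr L P x y := by
    refine (Finset.sum_subset Finset.inter_subset_left fun y hy hyn => ?_).symm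
    have hyb : y ∉ ballF x (2 * k) := fun hmem => hyn (Finset.mem_inter.2 ⟨hy, hmem⟩)
    rw [mem_ballF] at hyb
    push_neg at hyb
    obtain ⟨i, hi⟩ := hyb
    refine CovD_vanish hiid hco P (i := i) ?_
    rw [abs_sub_comm]
    have h4 : ((2 * k : ℕ) : ℤ) = 2 * (k : ℤ) := by push_cast; ring
    omega
  rw [step1]
  calc |∑ y ∈ cube d L ∩ ballF x (2 * k), CovD Pr L P x y|
      ≤ ∑ y ∈ cube d L ∩ ballF x (2 * k), |CovD Pr L P x y| :=
        Finset.abs_sum_le_sum_abs _ _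
    _ ≤ ∑ _y ∈ cube d L ∩ ballF x (2 * k), (B2 Pr P + B1 Pr P * B1 Pr P) :=
        Finset.sum_le_sum fun y _ => abs_CovD_le hiid hco P x y
    _ = (cube d L ∩ ballF x (2 * k)).card * (B2 Pr P + B1 Pr P * B1 Pr P) := by
        rw [Finset.sum_const, nsmul_eq_mul]
    _ ≤ _ := by
        refine mul_le_mul_of_nonneg_right ?_ ?_
        · have hc : (cube d L ∩ ballF x (2 * k)).card ≤ (ballF x (2 * k)).card :=
            Finset.card_le_card Finset.inter_subset_right
          have hcb : (ballF x (2 * k)).card = (2 * (2 * k) + 1) ^ d := by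
            rw [ballF, Fintype.card_piFinset]
            have : ∀ i : Fin d, (Finset.Icc (x i - (2 * k : ℕ)) (x i + (2 * k : ℕ))).card
                = 2 * (2 * k) + 1 := by
              intro i
              rw [Int.card_Icc]
              have : x i + (2 * k : ℕ) + 1 - (x i - (2 * k : ℕ))
                  = ((2 * (2 * k) + 1 : ℕ) : ℤ) := by push_cast; ring
              rw [this, Int.toNat_natCast]
            rw [Finset.prod_congr rfl fun i _ => this i, Finset.prod_const,
              Finset.card_univ, Fintype.card_fin]
          have := hcb ▸ hc
          exact_mod_cast this
        · have := B2_nonneg hiid hco P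
          have := B1_nonneg hiid hco P
          nlinarith

end RowSums

section Counting

variable {d : ℕ}

lemma card_cube (L : ℕ) : (cube d L).card = (2 * L + 1) ^ d := by
  rw [cube, Fintype.card_piFinset]
  have : ∀ i : Fin d, (Finset.Icc (-(L : ℤ)) (L : ℤ)).card = 2 * L + 1 := by
    intro i
    rw [Int.card_Icc]
    have : (L : ℤ) + 1 - (-(L : ℤ)) = ((2 * L + 1 : ℕ) : ℤ) := by push_cast; ring
    rw [this, Int.toNat_natCast]
  rw [Finset.prod_congr rfl fun i _ => this i, Finset.prod_const,
    Finset.card_univ, Fintype.card_fin]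

lemma cube_mono {L L' : ℕ} (h : L ≤ L') : cube d L ⊆ cube d L' := by
  intro x hx
  rw [mem_cube] at hx ⊢
  intro i
  exact le_trans (hx i) (by exact_mod_cast h)

end Counting


section VarExpand

variable {d : ℕ} {μ : Measure ℝ} {Pr : Measure (Cfg d)}
  [IsProbabilityMeasure μ] [IsProbabilityMeasure Pr]

lemma var_expand (hco : ∀ x : Pt d, Nice Pr (fun ω => ω x)) (P : Polynomial ℝ) (L : ℕ) :
    ∫ ω, ((∑ x ∈ cube d L, Damb d L P x ω) -
        ∫ ω', ∑ x ∈ cube d L, Damb d L P x ω' ∂Pr) ^ 2 ∂Pr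
      = ∑ x ∈ cube d L, ∑ y ∈ cube d L, CovD Pr L P x y := by
  set T : Cfg d → ℝ := fun ω => ∑ x ∈ cube d L, Damb d L P x ω with hT
  have hTn : Nice Pr T := Nice.sum _ _ fun x _ => nice_Damb hco P x
  have hT2 : Integrable (fun ω => T ω ^ 2) Pr := by
    have h := hTn.integrable_mul hTn
    rwa [show (fun ω => T ω * T ω) = fun ω => T ω ^ 2 from
      funext fun ω => (sq _).symm] at h
  set IT : ℝ := ∫ ω, T ω ∂Pr with hIT
  have expand : (fun ω => (T ω - IT) ^ 2)
      = fun ω => T ω ^ 2 - 2 * IT * T ω + IT ^ 2 := funext fun ω => by ring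
  have hmulint : ∀ x ∈ cube d L, ∀ y ∈ cube d L,
      Integrable (fun ω => Damb d L P x ω * Damb d L P y ω) Pr := fun x _ y _ =>
    (nice_Damb hco P x).integrable_mul (nice_Damb hco P y)
  have step1 : ∫ ω, (T ω - IT) ^ 2 ∂Pr = (∫ ω, T ω ^ 2 ∂Pr) - IT ^ 2 := by
    rw [expand]
    have h1 : Integrable (fun ω => T ω ^ 2 - 2 * IT * T ω) Pr := by
      have h := hT2.sub (hTn.integrable.const_mul (2 * IT))
      exact h
    have h2 : Integrable (fun ω => 2 * IT * T ω) Pr := hTn.integrable.const_mul (2 * IT)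
    rw [integral_add h1 (integrable_const _)]
    rw [integral_sub hT2 h2]
    rw [MeasureTheory.integral_const_mul, integral_const]
    simp only [measure_univ, probReal_univ, ENNReal.toReal_one, one_smul, ← hIT]
    ring
  have step2 : ∫ ω, T ω ^ 2 ∂Pr
      = ∑ x ∈ cube d L, ∑ y ∈ cube d L,
          ∫ ω, Damb d L P x ω * Damb d L P y ω ∂Pr := by
    have hsq : (fun ω => T ω ^ 2) = fun ω => ∑ x ∈ cube d L, ∑ y ∈ cube d L,
        Damb d L P x ω * Damb d L P y ω := by
      funext ω
      rw [sq, hT]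
      exact Finset.sum_mul_sum _ _ _ _
    rw [hsq]
    rw [integral_finset_sum _ fun x hx =>
      integrable_finset_sum _ fun y hy => hmulint x hx y hy]
    exact Finset.sum_congr rfl fun x hx => integral_finset_sum _ fun y hy => hmulint x hx y hy
  have step3 : IT = ∑ x ∈ cube d L, ∫ ω, Damb d L P x ω ∂Pr := by
    rw [hIT, hT]
    exact integral_finset_sum _ fun x _ => (nice_Damb hco P x).integrable
  have step4 : IT ^ 2 = ∑ x ∈ cube d L, ∑ y ∈ cube d L,
      (∫ ω, Damb d L P x ω ∂Pr) * ∫ ω, Damb d L P y ω ∂Pr := by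
    rw [sq, step3]
    exact Finset.sum_mul_sum _ _ _ _
  rw [step1, step2, step4, ← Finset.sum_sub_distrib]
  refine Finset.sum_congr rfl fun x _ => ?_
  rw [← Finset.sum_sub_distrib]
  exact Finset.sum_congr rfl fun y _ => rfl

end VarExpand

end Anderson


end AndersonAux

/-- `X_{P,L}` for a polynomial test function. -/
noncomputable def XPoly (d L : ℕ) (Pr : Measure (Cfg d)) (P : Polynomial ℝ) (ω : Cfg d) : ℝ :=
  (Real.sqrt ((cube d L).card))⁻¹ *
    ((Polynomial.aeval (ham d L ω) P).trace -
      ∫ ω', (Polynomial.aeval (ham d L ω') P).trace ∂Pr)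

open Anderson

theorem variance_converges_poly (d : ℕ) (hd : 1 ≤ d)
    (μ : Measure ℝ) [IsProbabilityMeasure μ]
    (Pr : Measure (Cfg d)) [IsProbabilityMeasure Pr] (hiid : IID d μ Pr)
    (hmom : ∀ k : ℕ, Integrable (fun x => |x| ^ k) μ)
    (P : Polynomial ℝ) (hdeg : 1 ≤ P.natDegree) :
    ∃ s : ℝ, Tendsto (fun L : ℕ => ∫ ω, (XPoly d L Pr P ω) ^ 2 ∂Pr) atTop (𝓝 s) := by
  classical
  have hco : ∀ x : Pt d, Nice Pr (fun ω => ω x) := nice_coord hiid hmom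
  set k := P.natDegree with hk
  set q := 3 * k with hq
  refine ⟨sV Pr P, ?_⟩
  set CB := B2 Pr P + B1 Pr P * B1 Pr P with hCB
  have hCBnn : 0 ≤ CB := by
    have := B2_nonneg hiid hco P
    have := B1_nonneg hiid hco P
    nlinarith
  set GB := (((2 * (2 * k) + 1) ^ d : ℕ) : ℝ) * CB with hGB
  have hGBnn : 0 ≤ GB := mul_nonneg (Nat.cast_nonneg _) hCBnn
  -- the exact finite-volume identity
  have key : ∀ L : ℕ, ∫ ω, (XPoly d L Pr P ω) ^ 2 ∂Pr
      = ((cube d L).card : ℝ)⁻¹ *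
        ∑ x ∈ cube d L, ∑ y ∈ cube d L, CovD Pr L P x y := by
    intro L
    have hcard0 : (0 : ℝ) ≤ ((cube d L).card : ℝ) := Nat.cast_nonneg _
    have e0 : (fun ω => XPoly d L Pr P ω ^ 2) = fun ω => (((cube d L).card : ℝ))⁻¹ *
        ((∑ x ∈ cube d L, Damb d L P x ω) -
          ∫ ω', ∑ x ∈ cube d L, Damb d L P x ω' ∂Pr) ^ 2 := by
      funext ω
      simp only [XPoly, trace_eq_sum_Damb, mul_pow]
      rw [inv_pow, Real.sq_sqrt hcard0]
    rw [e0, MeasureTheory.integral_const_mul, var_expand hco P L]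
  -- the eventual bound
  have evbound : ∀ L : ℕ, q ≤ L →
      |(∫ ω, (XPoly d L Pr P ω) ^ 2 ∂Pr) - sV Pr P| ≤
      (1 - ((cube d (L - q)).card : ℝ) / ((cube d L).card : ℝ)) * (|sV Pr P| + GB) := by
    intro L hL
    set c1 := ((cube d L).card : ℝ) with hc1
    set c0 := ((cube d (L - q)).card : ℝ) with hc0
    have hsub : cube d (L - q) ⊆ cube d L := cube_mono (Nat.sub_le L q)
    have hc1pos : (0 : ℝ) < c1 := by
      rw [hc1, card_cube]
      exact_mod_cast pow_pos (by omega) d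
    have hc0nn : (0 : ℝ) ≤ c0 := Nat.cast_nonneg _
    have hc0le : c0 ≤ c1 := by
      rw [hc0, hc1]
      exact_mod_cast Finset.card_le_card hsub
    set row : Pt d → ℝ := fun x => ∑ y ∈ cube d L, CovD Pr L P x y with hrow
    have hdeepsum : ∀ x ∈ cube d (L - q), row x = sV Pr P := by
      intro x hx
      refine row_sum_deep hiid hco P (hsub hx) ?_
      intro i
      have h1 := mem_cube.1 hx i
      have h2 : ((L - q : ℕ) : ℤ) = (L : ℤ) - (q : ℤ) := by
        rw [Nat.cast_sub hL]
      have h3 : (q : ℤ) = 3 * (k : ℤ) := by rw [hq]; push_cast; ring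
      omega
    have hbd : ∀ x, |row x| ≤ GB := by
      intro x
      rw [hGB, hCB]
      exact row_sum_bound hiid hco P x
    have split : ∑ x ∈ cube d L, row x
        = ∑ x ∈ cube d L \ cube d (L - q), row x + ∑ x ∈ cube d (L - q), row x :=
      (Finset.sum_sdiff hsub).symm
    have hrow0 : ∑ x ∈ cube d (L - q), row x = c0 * sV Pr P := by
      rw [Finset.sum_congr rfl hdeepsum, Finset.sum_const, nsmul_eq_mul, hc0]
    set E := ∑ x ∈ cube d L \ cube d (L - q), row x with hE
    have hEbound : |E| ≤ (c1 - c0) * GB := by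
      calc |E| ≤ ∑ x ∈ cube d L \ cube d (L - q), |row x| :=
            Finset.abs_sum_le_sum_abs _ _
        _ ≤ ∑ _x ∈ cube d L \ cube d (L - q), GB :=
            Finset.sum_le_sum fun x _ => hbd x
        _ = ((cube d L \ cube d (L - q)).card : ℝ) * GB := by
            rw [Finset.sum_const, nsmul_eq_mul]
        _ = (c1 - c0) * GB := by
            rw [Finset.card_sdiff_of_subset hsub]
            congr 1
            rw [hc1, hc0]
            rw [Nat.cast_sub (Finset.card_le_card hsub)]
    have hval : (∫ ω, (XPoly d L Pr P ω) ^ 2 ∂Pr) - sV Pr P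
        = c1⁻¹ * E + (c0 / c1 - 1) * sV Pr P := by
      rw [key L, show ∑ x ∈ cube d L, ∑ y ∈ cube d L, CovD Pr L P x y
        = ∑ x ∈ cube d L, row x from rfl, split, hrow0, ← hc1]
      field_simp
      ring
    rw [hval]
    have hnp : c0 / c1 - 1 ≤ 0 := by
      have : c0 / c1 ≤ 1 := (div_le_one hc1pos).2 hc0le
      linarith
    have h1 : |c1⁻¹ * E + (c0 / c1 - 1) * sV Pr P| ≤
        c1⁻¹ * |E| + (1 - c0 / c1) * |sV Pr P| := by
      calc |c1⁻¹ * E + (c0 / c1 - 1) * sV Pr P|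
          ≤ |c1⁻¹ * E| + |(c0 / c1 - 1) * sV Pr P| := abs_add_le _ _
        _ = c1⁻¹ * |E| + (1 - c0 / c1) * |sV Pr P| := by
            rw [abs_mul, abs_mul, abs_of_nonneg (le_of_lt (inv_pos.2 hc1pos)),
              abs_of_nonpos hnp]
            ring
    refine le_trans h1 ?_
    have h2 : c1⁻¹ * |E| ≤ (1 - c0 / c1) * GB := by
      calc c1⁻¹ * |E| ≤ c1⁻¹ * ((c1 - c0) * GB) := by
            exact mul_le_mul_of_nonneg_left hEbound (le_of_lt (inv_pos.2 hc1pos))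
        _ = (1 - c0 / c1) * GB := by
            field_simp
    have h3 : (1 - c0 / c1) * (|sV Pr P| + GB)
        = (1 - c0 / c1) * GB + (1 - c0 / c1) * |sV Pr P| := by ring
    rw [h3]
    exact add_le_add h2 (le_refl _)
  -- the limit of the volume ratio
  have hρlim : Tendsto
      (fun L : ℕ => ((cube d (L - q)).card : ℝ) / ((cube d L).card : ℝ))
      atTop (𝓝 1) := by
    have h1 : Tendsto (fun L : ℕ => (2 * (L : ℝ) + 1)) atTop atTop :=
      tendsto_atTop_add_const_right _ 1
        (Tendsto.const_mul_atTop two_pos tendsto_natCast_atTop_atTop)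
    have h2 : Tendsto (fun L : ℕ => (2 * (q : ℝ)) / (2 * (L : ℝ) + 1)) atTop (𝓝 0) :=
      Tendsto.div_atTop tendsto_const_nhds h1
    have h3 : Tendsto (fun L : ℕ => (1 - (2 * (q : ℝ)) / (2 * (L : ℝ) + 1)) ^ d)
        atTop (𝓝 1) := by
      have h4 := (tendsto_const_nhds (x := (1:ℝ)) (f := atTop (α := ℕ))).sub h2
      rw [sub_zero] at h4
      simpa using h4.pow d
    refine Tendsto.congr' ?_ h3
    filter_upwards [eventually_ge_atTop q] with L hL
    rw [card_cube, card_cube]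
    have hden : (2 * (L : ℝ) + 1) ≠ 0 := by positivity
    have hcast : (((2 * (L - q) + 1) ^ d : ℕ) : ℝ) = (2 * ((L : ℝ) - (q : ℝ)) + 1) ^ d := by
      push_cast [Nat.cast_sub hL]
      ring
    have hcast2 : (((2 * L + 1) ^ d : ℕ) : ℝ) = (2 * (L : ℝ) + 1) ^ d := by push_cast; ring
    rw [hcast, hcast2, ← div_pow]
    congr 1
    field_simp
    ring
  -- conclusion
  rw [← tendsto_sub_nhds_zero_iff]
  have hgz : Tendsto (fun L : ℕ =>
      (1 - ((cube d (L - q)).card : ℝ) / ((cube d L).card : ℝ)) * (|sV Pr P| + GB))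
      atTop (𝓝 0) := by
    have h5 := ((tendsto_const_nhds (x := (1:ℝ)) (f := atTop (α := ℕ))).sub hρlim).mul_const
      (|sV Pr P| + GB)
    simpa using h5
  refine squeeze_zero_norm' ?_ hgz
  filter_upwards [eventually_ge_atTop q] with L hL
  simpa [Real.norm_eq_abs] using evbound L hL
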